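/- arXiv:0802.2120 — 2 statements merged into one kernel-verified Lean document; each statement's English description precedes it below -/
import Mathlib

section
/- For five pairwise distinct complex numbers wi, wj, wk, wl, wm, the recursion ρ(wj,wk,wl,wm) = (ρ(wi,wj,wk,wm) − 1)/(ρ(wi,wj,wk,wm) − ρ(wi,wj,wk,wl)) holds, provided the denominator ρ(wi,wj,wk,wm) − ρ(wi,wj,wk,wl) is nonzero. -/
/-- The cross-ratio of four complex numbers. -/
noncomputable def crossRatio (w1 w2 w3 w4 : ℂ) : ℂ :=
  ((w2 - w3) * (w4 - w1)) / ((w1 - w2) * (w3 - w4))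

/-- The recursion relation among cross-ratios of five pairwise distinct points. -/
theorem crossRatio_recursion (wi wj wk wl wm : ℂ)
    (hij : wi ≠ wj) (hik : wi ≠ wk) (hil : wi ≠ wl) (him : wi ≠ wm)
    (hjk : wj ≠ wk) (hjl : wj ≠ wl) (hjm : wj ≠ wm)
    (hkl : wk ≠ wl) (hkm : wk ≠ wm) (hlm : wl ≠ wm)
    (hden : crossRatio wi wj wk wm - crossRatio wi wj wk wl ≠ 0) :
    crossRatio wj wk wl wm =
      (crossRatio wi wj wk wm - 1) /
        (crossRatio wi wj wk wm - crossRatio wi wj wk wl) := by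
  have h1 : wi - wj ≠ 0 := sub_ne_zero.2 hij
  have h2 : wk - wm ≠ 0 := sub_ne_zero.2 hkm
  have h3 : wk - wl ≠ 0 := sub_ne_zero.2 hkl
  have h4 : wj - wk ≠ 0 := sub_ne_zero.2 hjk
  have h5 : wl - wm ≠ 0 := sub_ne_zero.2 hlm
  have h6 : wi - wk ≠ 0 := sub_ne_zero.2 hik
  have h7 : wj - wm ≠ 0 := sub_ne_zero.2 hjm
  have hA1 : crossRatio wi wj wk wm - 1 =
      ((wj - wm) * (wk - wi)) / ((wi - wj) * (wk - wm)) := by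
    unfold crossRatio
    field_simp
    ring
  have hAB : crossRatio wi wj wk wm - crossRatio wi wj wk wl =
      ((wj - wk) * (wm - wl) * (wk - wi)) / ((wi - wj) * (wk - wm) * (wk - wl)) := by
    unfold crossRatio
    field_simp
    ring
  rw [hA1, hAB]
  unfold crossRatio
  have h8 : wm - wl ≠ 0 := sub_ne_zero.2 hlm.symm
  have h9 : wk - wi ≠ 0 := sub_ne_zero.2 hik.symm
  rw [div_div_div_eq, div_eq_div_iff (mul_ne_zero h4 h5)
    (mul_ne_zero (mul_ne_zero h1 h2) (mul_ne_zero (mul_ne_zero h4 h8) h9))]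
  ring
end

section
/- Suppose a maximal colored tree T' is obtained from T by a flop at an edge e joining trivalent vertices v_i (below) and v_j (above), where in T the left branch of v_i has a_i leaves, the right branch of v_i has b_i leaves, and the right branch of v_j has b_j leaves (so v_j has a_i + b_i leaves on the left). Then for positive variables x_1, ..., x_{n−1}, y, the ratio of monomials x^{μ_{T'}} / x^{μ_T} equals (x_i/x_j)^{a_i b_j}, a positive power of the simple ratio x_i/x_j. -/
/-- Effect of a flop on the weight-vector monomials: with
(μ_T)_i = a_i b_i, (μ_T)_j = (a_i + b_i) b_j, (μ_{T'})_i = a_i (b_i + b_j),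
(μ_{T'})_j = b_i b_j, the ratio of monomials is the positive power
(x_i/x_j)^{a_i b_j} of the simple ratio x_i/x_j. -/
theorem flop_monomial_ratio (xi xj : ℝ) (hxi : 0 < xi) (hxj : 0 < xj)
    (ai bi bj : ℕ) (hai : 1 ≤ ai) (hbi : 1 ≤ bi) (hbj : 1 ≤ bj) :
    (xi ^ (ai * (bi + bj)) * xj ^ (bi * bj)) /
        (xi ^ (ai * bi) * xj ^ ((ai + bi) * bj)) =
      (xi / xj) ^ (ai * bj) ∧ 0 < ai * bj := by
  constructor
  · rw [Nat.mul_add, Nat.add_mul, pow_add, pow_add, div_pow]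
    field_simp
  · exact Nat.mul_pos hai hbj
end
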